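/- Let (Ω, F, P) be a probability space with nested σ-algebras F_{m,n} satisfying ψ-mixing coefficient ψ. On the ℓ-fold product space (Ω^ℓ, F^ℓ, P^ℓ), suppose Γ ∈ F_{-∞,m₁} × F_{-∞,m₂} × ⋯ × F_{-∞,m_ℓ} and Δ ∈ F_{m₁+k₁,∞} × ⋯ × F_{m_ℓ+k_ℓ,∞}. Then |P^ℓ(Γ∩Δ) - P^ℓ(Γ)P^ℓ(Δ)| ≤ P^ℓ(Γ) P^ℓ(Δ) Σ_{i=1}^{ℓ} ψ(k_i) Π_{j=i+1}^{ℓ} (1 + ψ(k_j)). -/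

import Mathlib

open MeasureTheory Set ENNReal Finset
open scoped ENNReal

namespace Stmt9Aux

variable {Ω : Type*}

/-- Generic one-sided induction pass for the function version of ψ-mixing. -/
theorem pass {𝒜 mΩ : MeasurableSpace Ω} (μ : Measure Ω) (h𝒜 : 𝒜 ≤ mΩ) (c : ℝ≥0∞)
    (h : Ω → ℝ≥0∞) (hh : Measurable[mΩ] h)
    (hind : ∀ A : Set Ω, MeasurableSet[𝒜] A →
      (∫⁻ x, A.indicator (fun _ => (1:ℝ≥0∞)) x * h x ∂μ ≤ (1 + c) * (μ A * ∫⁻ x, h x ∂μ)) ∧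
      μ A * ∫⁻ x, h x ∂μ ≤ (∫⁻ x, A.indicator (fun _ => (1:ℝ≥0∞)) x * h x ∂μ) + c * (μ A * ∫⁻ x, h x ∂μ)) :
    ∀ f : Ω → ℝ≥0∞, Measurable[𝒜] f →
      (∫⁻ x, f x * h x ∂μ ≤ (1 + c) * ((∫⁻ x, f x ∂μ) * ∫⁻ x, h x ∂μ)) ∧
      (∫⁻ x, f x ∂μ) * ∫⁻ x, h x ∂μ ≤
        (∫⁻ x, f x * h x ∂μ) + c * ((∫⁻ x, f x ∂μ) * ∫⁻ x, h x ∂μ) := by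
  have hmul : ∀ f : Ω → ℝ≥0∞, Measurable[mΩ] f → Measurable[mΩ] fun x => f x * h x :=
    fun f hf => hf.mul hh
  apply @Measurable.ennreal_induction _ 𝒜
  · intro a A hA
    have hAm : MeasurableSet[mΩ] A := h𝒜 _ hA
    have e1 : ∀ x, A.indicator (fun _ => a) x * h x = a * (A.indicator (fun _ => (1:ℝ≥0∞)) x * h x) := by
      intro x
      by_cases hx : x ∈ A <;>
        simp [Set.indicator_of_mem, Set.indicator_of_notMem, hx, mul_assoc]
    have e2 : ∫⁻ x, A.indicator (fun _ => a) x * h x ∂μ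
        = a * ∫⁻ x, A.indicator (fun _ => (1:ℝ≥0∞)) x * h x ∂μ := by
      simp_rw [e1]
      exact lintegral_const_mul a ((measurable_const.indicator hAm).mul hh)
    have e3 : ∫⁻ x, A.indicator (fun _ => a) x ∂μ = a * μ A := lintegral_indicator_const hAm a
    obtain ⟨H1, H2⟩ := hind A hA
    constructor
    · rw [e2, e3]
      calc a * ∫⁻ x, A.indicator (fun _ => (1:ℝ≥0∞)) x * h x ∂μ
          ≤ a * ((1 + c) * (μ A * ∫⁻ x, h x ∂μ)) := mul_le_mul_right H1 a
        _ = (1 + c) * (a * μ A * ∫⁻ x, h x ∂μ) := by ring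
    · rw [e2, e3]
      calc a * μ A * ∫⁻ x, h x ∂μ = a * (μ A * ∫⁻ x, h x ∂μ) := by ring
        _ ≤ a * ((∫⁻ x, A.indicator (fun _ => (1:ℝ≥0∞)) x * h x ∂μ) + c * (μ A * ∫⁻ x, h x ∂μ)) :=
            mul_le_mul_right H2 a
        _ = a * (∫⁻ x, A.indicator (fun _ => (1:ℝ≥0∞)) x * h x ∂μ) + c * (a * μ A * ∫⁻ x, h x ∂μ) := by ring
  · intro f g _ hf hg Pf Pg
    have hfm : Measurable[mΩ] f := hf.mono h𝒜 le_rfl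
    have ea : ∫⁻ x, (f + g) x * h x ∂μ = (∫⁻ x, f x * h x ∂μ) + ∫⁻ x, g x * h x ∂μ := by
      simp_rw [Pi.add_apply, add_mul]
      exact lintegral_add_left (hmul f hfm) _
    have eb : ∫⁻ x, (f + g) x ∂μ = (∫⁻ x, f x ∂μ) + ∫⁻ x, g x ∂μ := by
      simp_rw [Pi.add_apply]
      exact lintegral_add_left hfm _
    rw [ea, eb]
    constructor
    · calc (∫⁻ x, f x * h x ∂μ) + ∫⁻ x, g x * h x ∂μ
          ≤ (1 + c) * ((∫⁻ x, f x ∂μ) * ∫⁻ x, h x ∂μ)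
            + (1 + c) * ((∫⁻ x, g x ∂μ) * ∫⁻ x, h x ∂μ) := add_le_add Pf.1 Pg.1
        _ = (1 + c) * (((∫⁻ x, f x ∂μ) + ∫⁻ x, g x ∂μ) * ∫⁻ x, h x ∂μ) := by ring
    · calc ((∫⁻ x, f x ∂μ) + ∫⁻ x, g x ∂μ) * ∫⁻ x, h x ∂μ
          = (∫⁻ x, f x ∂μ) * ∫⁻ x, h x ∂μ + (∫⁻ x, g x ∂μ) * ∫⁻ x, h x ∂μ := by ring
        _ ≤ ((∫⁻ x, f x * h x ∂μ) + c * ((∫⁻ x, f x ∂μ) * ∫⁻ x, h x ∂μ))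
            + ((∫⁻ x, g x * h x ∂μ) + c * ((∫⁻ x, g x ∂μ) * ∫⁻ x, h x ∂μ)) :=
            add_le_add Pf.2 Pg.2
        _ = ((∫⁻ x, f x * h x ∂μ) + ∫⁻ x, g x * h x ∂μ)
            + c * (((∫⁻ x, f x ∂μ) + ∫⁻ x, g x ∂μ) * ∫⁻ x, h x ∂μ) := by ring
  · intro f hf hmono Pf
    have hfm : ∀ n, Measurable[mΩ] (f n) := fun n => (hf n).mono h𝒜 le_rfl
    have hs : ∀ x, (⨆ n, f n x) * h x = ⨆ n, f n x * h x :=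
      fun x => ENNReal.iSup_mul (fun n => f n x) (h x)
    simp_rw [hs]
    rw [lintegral_iSup (fun n => hmul _ (hfm n))
        (fun i j hij x => mul_le_mul_left (hmono hij x) _),
      lintegral_iSup hfm hmono]
    constructor
    · refine iSup_le fun n => (Pf n).1.trans ?_
      gcongr
      exact le_iSup (fun n => ∫⁻ a, f n a ∂μ) n
    · rw [ENNReal.iSup_mul (fun n => ∫⁻ x, f n x ∂μ) _]
      refine iSup_le fun n => (Pf n).2.trans ?_
      gcongr
      · exact le_iSup (fun n => ∫⁻ a, f n a * h a ∂μ) n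
      · exact le_iSup (fun i => (∫⁻ x, f i x ∂μ) * ∫⁻ x, h x ∂μ) n

/-- Function version of ψ-mixing between two sub-σ-algebras. -/
theorem fun_mix {𝒜 ℬ mΩ : MeasurableSpace Ω} (μ : Measure Ω)
    (h𝒜 : 𝒜 ≤ mΩ) (hℬ : ℬ ≤ mΩ) (c : ℝ≥0∞)
    (hset : ∀ A B : Set Ω, MeasurableSet[𝒜] A → MeasurableSet[ℬ] B →
      μ (A ∩ B) ≤ (1 + c) * (μ A * μ B) ∧
      μ A * μ B ≤ μ (A ∩ B) + c * (μ A * μ B))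
    (f g : Ω → ℝ≥0∞) (hf : Measurable[𝒜] f) (hg : Measurable[ℬ] g) :
    (∫⁻ x, f x * g x ∂μ ≤ (1 + c) * ((∫⁻ x, f x ∂μ) * ∫⁻ x, g x ∂μ)) ∧
    (∫⁻ x, f x ∂μ) * ∫⁻ x, g x ∂μ ≤
      (∫⁻ x, f x * g x ∂μ) + c * ((∫⁻ x, f x ∂μ) * ∫⁻ x, g x ∂μ) := by
  have hfm : Measurable[mΩ] f := hf.mono h𝒜 le_rfl
  -- Step 1: with g an indicator of a set in ℬ.
  have step1 : ∀ B : Set Ω, MeasurableSet[ℬ] B →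
      (∫⁻ x, f x * B.indicator (fun _ => (1:ℝ≥0∞)) x ∂μ ≤ (1 + c) * ((∫⁻ x, f x ∂μ) * μ B)) ∧
      (∫⁻ x, f x ∂μ) * μ B ≤
        (∫⁻ x, f x * B.indicator (fun _ => (1:ℝ≥0∞)) x ∂μ) + c * ((∫⁻ x, f x ∂μ) * μ B) := by
    intro B hB
    have hBm : MeasurableSet[mΩ] B := hℬ _ hB
    have hhB : Measurable[mΩ] (B.indicator (1 : Ω → ℝ≥0∞)) := measurable_const.indicator hBm
    have hint : ∫⁻ x, B.indicator (fun _ => (1:ℝ≥0∞)) x ∂μ = μ B := by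
      rw [lintegral_indicator_const hBm 1, one_mul]
    have key := pass μ h𝒜 c (B.indicator (fun _ => (1:ℝ≥0∞))) hhB ?_ f hf
    · rwa [hint] at key
    · intro A hA
      have hAm : MeasurableSet[mΩ] A := h𝒜 _ hA
      have e : ∫⁻ x, A.indicator (fun _ => (1:ℝ≥0∞)) x * B.indicator (fun _ => (1:ℝ≥0∞)) x ∂μ = μ (A ∩ B) := by
        have : ∀ x : Ω, A.indicator (fun _ => (1:ℝ≥0∞)) x * B.indicator (fun _ => (1:ℝ≥0∞)) x
            = (A ∩ B).indicator (fun _ => (1 : ℝ≥0∞)) x := by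
          intro x
          rw [← Set.inter_indicator_mul]
          simp
        simp_rw [this]
        rw [lintegral_indicator_const (hAm.inter hBm) 1, one_mul]
      rw [e, hint]
      exact hset A B hA hB
  -- Step 2: general g, using step1 as the indicator hypothesis with roles swapped.
  have step2 := pass μ hℬ c f hfm ?_ g hg
  · have e : ∀ x, g x * f x = f x * g x := fun x => mul_comm _ _
    simp_rw [e] at step2
    constructor
    · refine step2.1.trans (le_of_eq ?_); ring
    · refine le_trans (le_of_eq (by ring)) (step2.2.trans (le_of_eq (by ring)))
  · intro B hB
    obtain ⟨s1, s2⟩ := step1 B hB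
    have e : ∀ x, B.indicator (fun _ => (1:ℝ≥0∞)) x * f x = f x * B.indicator (fun _ => (1:ℝ≥0∞)) x := fun x => mul_comm _ _
    simp_rw [e]
    constructor
    · refine s1.trans (le_of_eq ?_); ring
    · refine le_trans (le_of_eq (by ring)) (s2.trans (le_of_eq (by ring)))

/-- Sum/product combinatorics. -/
noncomputable def Saux : ∀ n : ℕ, (Fin n → ℝ≥0∞) → ℝ≥0∞ :=
  fun n c => ∑ i : Fin n, c i * ∏ j ∈ Finset.Ioi i, (1 + c j)

theorem Saux_succ (n : ℕ) (c : Fin (n + 1) → ℝ≥0∞) :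
    Saux (n + 1) c = c 0 * ∏ j : Fin n, (1 + c j.succ) + Saux n (fun i => c i.succ) := by
  rw [Saux, Saux, Fin.sum_univ_succ, Fin.prod_Ioi_zero]
  congr 1
  exact Finset.sum_congr rfl fun i _ => by rw [Fin.prod_Ioi_succ]

theorem Saux_prod (n : ℕ) (c : Fin n → ℝ≥0∞) :
    1 + Saux n c = ∏ j : Fin n, (1 + c j) := by
  induction n with
  | zero => simp [Saux]
  | succ n ih =>
    rw [Saux_succ, Fin.prod_univ_succ, ← ih (fun i => c i.succ)]
    ring

theorem pi_mono {ι : Type*} {α : ι → Type*} (m₁ m₂ : ∀ i, MeasurableSpace (α i))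
    (h : ∀ i, m₁ i ≤ m₂ i) :
    (@MeasurableSpace.pi ι α m₁) ≤ (@MeasurableSpace.pi ι α m₂) :=
  iSup_mono fun i => MeasurableSpace.comap_mono (h i)

theorem prod_mono {α β : Type*} {ma ma' : MeasurableSpace α} {mb mb' : MeasurableSpace β}
    (h1 : ma ≤ ma') (h2 : mb ≤ mb') : ma.prod mb ≤ ma'.prod mb' :=
  sup_le_sup (MeasurableSpace.comap_mono h1) (MeasurableSpace.comap_mono h2)


theorem setmix {Ω : Type*} {𝒜 ℬ mΩ : MeasurableSpace Ω} (P : Measure Ω)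
    [IsProbabilityMeasure P] (h𝒜 : 𝒜 ≤ mΩ) (hℬ : ℬ ≤ mΩ)
    {ψj : ℝ} (hψj : 0 ≤ ψj)
    (hm : ∀ A B : Set Ω, MeasurableSet[𝒜] A → MeasurableSet[ℬ] B →
      (P A).toReal * (P B).toReal ≠ 0 →
      |(P (A ∩ B)).toReal / ((P A).toReal * (P B).toReal) - 1| ≤ ψj) :
    ∀ A B : Set Ω, MeasurableSet[𝒜] A → MeasurableSet[ℬ] B →
      P (A ∩ B) ≤ (1 + ENNReal.ofReal ψj) * (P A * P B) ∧
      P A * P B ≤ P (A ∩ B) + ENNReal.ofReal ψj * (P A * P B) := by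
  intro A B hA hB
  by_cases hA0 : P A = 0
  · have h1 : P (A ∩ B) = 0 := measure_inter_null_of_null_left (μ := P) B hA0
    simp [h1, hA0]
  by_cases hB0 : P B = 0
  · have h1 : P (A ∩ B) = 0 := measure_inter_null_of_null_right (μ := P) A hB0
    simp [h1, hB0]
  · -- both positive
    have hAfin : P A ≠ ⊤ := measure_ne_top P A
    have hBfin : P B ≠ ⊤ := measure_ne_top P B
    set a := (P A).toReal with ha
    set b := (P B).toReal with hb
    have hapos : 0 < a := ENNReal.toReal_pos hA0 hAfin
    have hbpos : 0 < b := ENNReal.toReal_pos hB0 hBfin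
    have habne : a * b ≠ 0 := by positivity
    have hkey := hm A B hA hB habne
    set x := (P (A ∩ B)).toReal with hx
    have habpos : 0 < a * b := by positivity
    have hABS : |x - a * b| ≤ ψj * (a * b) := by
      have : |x / (a * b) - 1| = |x - a * b| / (a * b) := by
        rw [div_sub_one habpos.ne', abs_div, abs_of_pos habpos]
      rw [this] at hkey
      calc |x - a * b| = |x - a * b| / (a * b) * (a * b) := by field_simp
        _ ≤ ψj * (a * b) := by
            apply mul_le_mul_of_nonneg_right hkey habpos.le
    have hub : x ≤ (1 + ψj) * (a * b) := by
      have := abs_le.mp hABS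
      nlinarith [this.2]
    have hlb : a * b ≤ x + ψj * (a * b) := by
      have := abs_le.mp hABS
      nlinarith [this.1]
    have hPAB : P (A ∩ B) = ENNReal.ofReal x := by
      rw [hx, ENNReal.ofReal_toReal (measure_ne_top P _)]
    have hPab : P A * P B = ENNReal.ofReal (a * b) := by
      rw [ENNReal.ofReal_mul hapos.le, ha, hb,
        ENNReal.ofReal_toReal hAfin, ENNReal.ofReal_toReal hBfin]
    constructor
    · rw [hPAB, hPab, ← ENNReal.ofReal_one, ← ENNReal.ofReal_add one_pos.le hψj,
        ← ENNReal.ofReal_mul (by positivity)]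
      exact ENNReal.ofReal_le_ofReal hub
    · rw [hPAB, hPab, ← ENNReal.ofReal_mul hψj]
      rw [← ENNReal.ofReal_add (by rw [hx]; exact ENNReal.toReal_nonneg) (by positivity)]
      exact ENNReal.ofReal_le_ofReal hlb

theorem insert_measurable {Ω : Type*} (n : ℕ) (G : Fin (n + 1) → MeasurableSpace Ω) :
    @Measurable (Ω × (Fin n → Ω)) (Fin (n + 1) → Ω)
      ((G 0).prod (@MeasurableSpace.pi (Fin n) (fun _ => Ω) (fun i => G i.succ)))
      (@MeasurableSpace.pi (Fin (n + 1)) (fun _ => Ω) G)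
      (fun p => Fin.insertNth 0 p.1 p.2) := by
  refine (@measurable_pi_iff (Ω × (Fin n → Ω)) (Fin (n + 1)) (fun _ => Ω)
      ((G 0).prod (@MeasurableSpace.pi (Fin n) (fun _ => Ω) (fun i => G i.succ))) G _).mpr ?_
  intro j
  refine Fin.cases ?_ ?_ j
  · have h : (fun p : Ω × (Fin n → Ω) => Fin.insertNth (α := fun _ : Fin (n+1) => Ω) 0 p.1 p.2 0)
        = fun p => p.1 := by
      funext p
      exact Fin.insertNth_apply_same (α := fun _ : Fin (n+1) => Ω) 0 p.1 p.2
    rw [h]; exact measurable_fst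
  · intro i
    have h : (fun p : Ω × (Fin n → Ω) => Fin.insertNth (α := fun _ : Fin (n+1) => Ω) 0 p.1 p.2 i.succ)
        = fun p => p.2 i := by
      funext p
      exact Fin.insertNth_apply_succAbove (α := fun _ : Fin (n+1) => Ω) 0 p.1 p.2 i
    rw [h]
    exact (@measurable_pi_apply (Fin n) (fun _ => Ω) (fun i => G i.succ) i).comp measurable_snd

theorem esymm_eq {Ω : Type*} [MeasurableSpace Ω] (n : ℕ) :
    ⇑(MeasurableEquiv.piFinSuccAbove (fun _ : Fin (n + 1) => Ω) 0).symm
      = fun p : Ω × (Fin n → Ω) => Fin.insertNth 0 p.1 p.2 := by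
  funext p
  simp [MeasurableEquiv.piFinSuccAbove, MeasurableEquiv.symm, Fin.insertNthEquiv]

theorem main {Ω : Type*} {mΩ : MeasurableSpace Ω} (P : Measure Ω) [IsProbabilityMeasure P]
    (F : EReal → EReal → MeasurableSpace Ω)
    (hsub : ∀ m n : EReal, F m n ≤ mΩ)
    (ψ : ℕ → ℝ) (hψ : ∀ j, 0 ≤ ψ j)
    (hmix : ∀ (r : ℤ) (j : ℕ) (A B : Set Ω),
      MeasurableSet[F ⊥ ((r : ℝ) : EReal)] A →
      MeasurableSet[F ((((r + j : ℤ)) : ℝ) : EReal) ⊤] B →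
      (P A).toReal * (P B).toReal ≠ 0 →
      |(P (A ∩ B)).toReal / ((P A).toReal * (P B).toReal) - 1| ≤ ψ j) :
    ∀ (n : ℕ) (m : Fin n → ℤ) (k : Fin n → ℕ) (f g : (Fin n → Ω) → ℝ≥0∞),
      Measurable[@MeasurableSpace.pi (Fin n) (fun _ => Ω) (fun i => F ⊥ ((m i : ℝ) : EReal))] f →
      Measurable[@MeasurableSpace.pi (Fin n) (fun _ => Ω)
        (fun i => F (((m i + k i : ℤ) : ℝ) : EReal) ⊤)] g →
      (∫⁻ x, f x * g x ∂(Measure.pi fun _ : Fin n => P) ≤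
        (1 + Saux n fun i => ENNReal.ofReal (ψ (k i))) *
          ((∫⁻ x, f x ∂(Measure.pi fun _ : Fin n => P)) *
            ∫⁻ x, g x ∂(Measure.pi fun _ : Fin n => P))) ∧
      (∫⁻ x, f x ∂(Measure.pi fun _ : Fin n => P)) *
          ∫⁻ x, g x ∂(Measure.pi fun _ : Fin n => P) ≤
        (∫⁻ x, f x * g x ∂(Measure.pi fun _ : Fin n => P)) +
          (Saux n fun i => ENNReal.ofReal (ψ (k i))) *
            ((∫⁻ x, f x ∂(Measure.pi fun _ : Fin n => P)) *
              ∫⁻ x, g x ∂(Measure.pi fun _ : Fin n => P)) := by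
  intro n
  induction n with
  | zero =>
    intro m k f g hf hg
    letI : MeasurableSpace (Fin 0 → Ω) := @MeasurableSpace.pi (Fin 0) (fun _ => Ω) (fun _ => mΩ)
    have h1 : ∀ h : (Fin 0 → Ω) → ℝ≥0∞,
        ∫⁻ x, h x ∂(Measure.pi fun _ : Fin 0 => P) = h default := by
      intro h
      rw [lintegral_unique, measure_univ, mul_one]
    simp only [h1]
    constructor
    · simp [Saux]
    · simp [Saux]
  | succ n ih =>
    intro m k f g hf hg
    letI : MeasurableSpace (Fin n → Ω) := @MeasurableSpace.pi (Fin n) (fun _ => Ω) (fun _ => mΩ)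
    letI : MeasurableSpace (Fin (n+1) → Ω) :=
      @MeasurableSpace.pi (Fin (n+1)) (fun _ => Ω) (fun _ => mΩ)
    letI : MeasurableSpace (Ω × (Fin n → Ω)) :=
      @Prod.instMeasurableSpace _ _ mΩ (@MeasurableSpace.pi (Fin n) (fun _ => Ω) (fun _ => mΩ))
    set μ : Measure (Fin (n + 1) → Ω) := Measure.pi fun _ => P with hμdef
    set ν : Measure (Fin n → Ω) := Measure.pi fun _ => P with hνdef
    set e := MeasurableEquiv.piFinSuccAbove (fun _ : Fin (n + 1) => Ω) 0 with he
    have hpres : MeasurePreserving e μ (P.prod ν) :=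
      measurePreserving_piFinSuccAbove (fun _ : Fin (n + 1) => P) 0
    set Gf : Fin (n + 1) → MeasurableSpace Ω := fun i => F ⊥ ((m i : ℝ) : EReal) with hGf
    set Gg : Fin (n + 1) → MeasurableSpace Ω :=
      fun i => F (((m i + k i : ℤ) : ℝ) : EReal) ⊤ with hGg
    -- measurability of the insertion map
    have hsymm : ∀ G : Fin (n + 1) → MeasurableSpace Ω,
        @Measurable (Ω × (Fin n → Ω)) (Fin (n + 1) → Ω)
          ((G 0).prod (@MeasurableSpace.pi (Fin n) (fun _ => Ω) (fun i => G i.succ)))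
          (@MeasurableSpace.pi (Fin (n + 1)) (fun _ => Ω) G) ⇑e.symm := by
      intro G
      rw [he, esymm_eq n]
      exact insert_measurable n G
    have hf' : @Measurable (Ω × (Fin n → Ω)) ℝ≥0∞
        ((Gf 0).prod (@MeasurableSpace.pi (Fin n) (fun _ => Ω) (fun i => Gf i.succ))) _
        (f ∘ ⇑e.symm) := hf.comp (hsymm Gf)
    have hg' : @Measurable (Ω × (Fin n → Ω)) ℝ≥0∞
        ((Gg 0).prod (@MeasurableSpace.pi (Fin n) (fun _ => Ω) (fun i => Gg i.succ))) _
        (g ∘ ⇑e.symm) := hg.comp (hsymm Gg)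
    have hf'' : @Measurable (Ω × (Fin n → Ω)) ℝ≥0∞
        ((Gf 0).prod (@MeasurableSpace.pi (Fin n) (fun _ => Ω) (fun _ => mΩ))) _
        (f ∘ ⇑e.symm) :=
      hf'.mono (prod_mono le_rfl (pi_mono _ _ fun i => hsub _ _)) le_rfl
    have hg'' : @Measurable (Ω × (Fin n → Ω)) ℝ≥0∞
        ((Gg 0).prod (@MeasurableSpace.pi (Fin n) (fun _ => Ω) (fun _ => mΩ))) _
        (g ∘ ⇑e.symm) :=
      hg'.mono (prod_mono le_rfl (pi_mono _ _ fun i => hsub _ _)) le_rfl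
    have hffull : Measurable (f ∘ ⇑e.symm) :=
      hf'.mono (prod_mono (hsub _ _) (pi_mono _ _ fun i => hsub _ _)) le_rfl
    have hgfull : Measurable (g ∘ ⇑e.symm) :=
      hg'.mono (prod_mono (hsub _ _) (pi_mono _ _ fun i => hsub _ _)) le_rfl
    -- the conditional integrals in the first coordinate
    set φ : Ω → ℝ≥0∞ := fun ω => ∫⁻ x, (f ∘ ⇑e.symm) (ω, x) ∂ν with hφdef
    set γ : Ω → ℝ≥0∞ := fun ω => ∫⁻ x, (g ∘ ⇑e.symm) (ω, x) ∂ν with hγdef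
    have hφA : Measurable[Gf 0] φ :=
      @Measurable.lintegral_prod_right' Ω (Fin n → Ω) (Gf 0)
        (@MeasurableSpace.pi (Fin n) (fun _ => Ω) (fun _ => mΩ)) ν _ _ hf''
    have hγB : Measurable[Gg 0] γ :=
      @Measurable.lintegral_prod_right' Ω (Fin n → Ω) (Gg 0)
        (@MeasurableSpace.pi (Fin n) (fun _ => Ω) (fun _ => mΩ)) ν _ _ hg''
    have hφm : Measurable φ := hφA.mono (hsub _ _) le_rfl
    have hγm : Measurable γ := hγB.mono (hsub _ _) le_rfl
    -- Fubini
    have hfub : ∀ h : (Fin (n + 1) → Ω) → ℝ≥0∞, Measurable (h ∘ ⇑e.symm) →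
        ∫⁻ x, h x ∂μ = ∫⁻ ω, ∫⁻ x, (h ∘ ⇑e.symm) (ω, x) ∂ν ∂P := by
      intro h hm
      rw [← lintegral_prod _ hm.aemeasurable, ← hpres.lintegral_comp hm]
      refine lintegral_congr fun x => ?_
      simp [Function.comp]
    have hIf : ∫⁻ x, f x ∂μ = ∫⁻ ω, φ ω ∂P := hfub f hffull
    have hIg : ∫⁻ x, g x ∂μ = ∫⁻ ω, γ ω ∂P := hfub g hgfull
    have hIfg : ∫⁻ x, f x * g x ∂μ
        = ∫⁻ ω, ∫⁻ x, (f ∘ ⇑e.symm) (ω, x) * (g ∘ ⇑e.symm) (ω, x) ∂ν ∂P := by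
      have := hfub (fun x => f x * g x) (hffull.mul hgfull)
      simpa [Function.comp] using this
    -- induction hypothesis applied to the sections
    set Sn : ℝ≥0∞ := Saux n (fun i => ENNReal.ofReal (ψ (k i.succ))) with hSn
    set SN : ℝ≥0∞ := Saux (n + 1) (fun i => ENNReal.ofReal (ψ (k i))) with hSN
    set c0 : ℝ≥0∞ := ENNReal.ofReal (ψ (k 0)) with hc0
    have hsec : ∀ ω : Ω,
        (∫⁻ x, (f ∘ ⇑e.symm) (ω, x) * (g ∘ ⇑e.symm) (ω, x) ∂ν ≤ (1 + Sn) * (φ ω * γ ω)) ∧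
        φ ω * γ ω ≤ (∫⁻ x, (f ∘ ⇑e.symm) (ω, x) * (g ∘ ⇑e.symm) (ω, x) ∂ν)
          + Sn * (φ ω * γ ω) := by
      intro ω
      exact ih (fun i => m i.succ) (fun i => k i.succ)
        (fun x => (f ∘ ⇑e.symm) (ω, x)) (fun x => (g ∘ ⇑e.symm) (ω, x))
        (hf'.comp measurable_prodMk_left) (hg'.comp measurable_prodMk_left)
    -- mixing in the first coordinate
    have hsetm := setmix P (hsub ⊥ ((m 0 : ℝ) : EReal))
      (hsub (((m 0 + k 0 : ℤ) : ℝ) : EReal) ⊤) (hψ (k 0)) (hmix (m 0) (k 0))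
    have hmixfun := fun_mix P (hsub ⊥ ((m 0 : ℝ) : EReal))
      (hsub (((m 0 + k 0 : ℤ) : ℝ) : EReal) ⊤) c0 hsetm φ γ hφA hγB
    obtain ⟨hfm1, hfm2⟩ := hmixfun
    -- recursion for the mixing constant
    have hrec : SN = c0 * (1 + Sn) + Sn := by
      rw [hSN, Saux_succ, hSn, ← Saux_prod]
    -- putting everything together
    have hInner1 : ∫⁻ x, f x * g x ∂μ ≤ (1 + Sn) * ∫⁻ ω, φ ω * γ ω ∂P := by
      rw [hIfg]
      calc ∫⁻ ω, ∫⁻ x, (f ∘ ⇑e.symm) (ω, x) * (g ∘ ⇑e.symm) (ω, x) ∂ν ∂P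
          ≤ ∫⁻ ω, (1 + Sn) * (φ ω * γ ω) ∂P := lintegral_mono fun ω => (hsec ω).1
        _ = (1 + Sn) * ∫⁻ ω, φ ω * γ ω ∂P := lintegral_const_mul _ (hφm.mul hγm)
    have hinner_meas : Measurable fun ω =>
        ∫⁻ x, (f ∘ ⇑e.symm) (ω, x) * (g ∘ ⇑e.symm) (ω, x) ∂ν :=
      (hffull.mul hgfull).lintegral_prod_right'
    have hInner2 : ∫⁻ ω, φ ω * γ ω ∂P
        ≤ (∫⁻ x, f x * g x ∂μ) + Sn * ∫⁻ ω, φ ω * γ ω ∂P := by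
      rw [hIfg]
      calc ∫⁻ ω, φ ω * γ ω ∂P
          ≤ ∫⁻ ω, (∫⁻ x, (f ∘ ⇑e.symm) (ω, x) * (g ∘ ⇑e.symm) (ω, x) ∂ν
              + Sn * (φ ω * γ ω)) ∂P := lintegral_mono fun ω => (hsec ω).2
        _ = _ := by
            rw [lintegral_add_left hinner_meas, lintegral_const_mul (f := fun ω => φ ω * γ ω) _ (hφm.mul hγm)]
    refine ⟨?_, ?_⟩
    · calc ∫⁻ x, f x * g x ∂μ ≤ (1 + Sn) * ∫⁻ ω, φ ω * γ ω ∂P := hInner1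
        _ ≤ (1 + Sn) * ((1 + c0) * ((∫⁻ ω, φ ω ∂P) * ∫⁻ ω, γ ω ∂P)) :=
            mul_le_mul_right hfm1 _
        _ = (1 + SN) * ((∫⁻ ω, φ ω ∂P) * ∫⁻ ω, γ ω ∂P) := by rw [hrec]; ring
        _ = (1 + SN) * ((∫⁻ x, f x ∂μ) * ∫⁻ x, g x ∂μ) := by rw [hIf, hIg]
    · calc (∫⁻ x, f x ∂μ) * ∫⁻ x, g x ∂μ
          = (∫⁻ ω, φ ω ∂P) * ∫⁻ ω, γ ω ∂P := by rw [hIf, hIg]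
        _ ≤ (∫⁻ ω, φ ω * γ ω ∂P) + c0 * ((∫⁻ ω, φ ω ∂P) * ∫⁻ ω, γ ω ∂P) := hfm2
        _ ≤ ((∫⁻ x, f x * g x ∂μ) + Sn * ∫⁻ ω, φ ω * γ ω ∂P)
            + c0 * ((∫⁻ ω, φ ω ∂P) * ∫⁻ ω, γ ω ∂P) := add_le_add_left hInner2 _
        _ ≤ ((∫⁻ x, f x * g x ∂μ) + Sn * ((1 + c0) * ((∫⁻ ω, φ ω ∂P) * ∫⁻ ω, γ ω ∂P)))
            + c0 * ((∫⁻ ω, φ ω ∂P) * ∫⁻ ω, γ ω ∂P) := by gcongr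
        _ = (∫⁻ x, f x * g x ∂μ) + SN * ((∫⁻ ω, φ ω ∂P) * ∫⁻ ω, γ ω ∂P) := by
              rw [hrec]; ring
        _ = (∫⁻ x, f x * g x ∂μ) + SN * ((∫⁻ x, f x ∂μ) * ∫⁻ x, g x ∂μ) := by rw [hIf, hIg]
theorem Saux_ne_top (n : ℕ) (c : Fin n → ℝ≥0∞) (h : ∀ i, c i ≠ ⊤) : Saux n c ≠ ⊤ := by
  rw [Saux]
  refine (ENNReal.sum_lt_top.mpr fun i _ => ?_).ne
  refine ENNReal.mul_lt_top (h i).lt_top (ENNReal.prod_lt_top fun j _ => ?_)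
  exact ENNReal.add_lt_top.mpr ⟨ENNReal.one_lt_top, (h j).lt_top⟩

theorem Saux_toReal (n : ℕ) (r : Fin n → ℝ) (h : ∀ i, 0 ≤ r i) :
    (Saux n fun i => ENNReal.ofReal (r i)).toReal
      = ∑ i : Fin n, r i * ∏ j ∈ Finset.Ioi i, (1 + r j) := by
  rw [Saux, ENNReal.toReal_sum]
  · refine Finset.sum_congr rfl fun i _ => ?_
    rw [ENNReal.toReal_mul, ENNReal.toReal_ofReal (h i), ENNReal.toReal_prod]
    congr 1
    refine Finset.prod_congr rfl fun j _ => ?_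
    rw [ENNReal.toReal_add ENNReal.one_ne_top ENNReal.ofReal_ne_top, ENNReal.toReal_one,
      ENNReal.toReal_ofReal (h j)]
  · intro i _
    refine ENNReal.mul_ne_top ENNReal.ofReal_ne_top ?_
    refine (ENNReal.prod_lt_top fun j _ => ?_).ne
    exact ENNReal.add_lt_top.mpr ⟨ENNReal.one_lt_top, ENNReal.ofReal_lt_top⟩

end Stmt9Aux

open MeasureTheory

theorem stmt9 {Ω : Type*} [mΩ : MeasurableSpace Ω] (P : Measure Ω) [IsProbabilityMeasure P]
    (F : EReal → EReal → MeasurableSpace Ω)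
    (hsub : ∀ m n : EReal, F m n ≤ mΩ)
    (hnested : ∀ m n m₁ n₁ : EReal, m₁ ≤ m → n ≤ n₁ → F m n ≤ F m₁ n₁)
    (ψ : ℕ → ℝ) (hψ : ∀ j, 0 ≤ ψ j)
    (hmix : ∀ (r : ℤ) (j : ℕ) (A B : Set Ω),
      MeasurableSet[F ⊥ ((r : ℝ) : EReal)] A →
      MeasurableSet[F ((((r + j : ℤ)) : ℝ) : EReal) ⊤] B →
      (P A).toReal * (P B).toReal ≠ 0 →
      |(P (A ∩ B)).toReal / ((P A).toReal * (P B).toReal) - 1| ≤ ψ j)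
    (ℓ : ℕ) (m : Fin ℓ → ℤ) (k : Fin ℓ → ℕ)
    (Γ Δ : Set (Fin ℓ → Ω))
    (hΓ : MeasurableSet[@MeasurableSpace.pi (Fin ℓ) (fun _ => Ω)
      (fun i => F ⊥ (((m i : ℤ) : ℝ) : EReal))] Γ)
    (hΔ : MeasurableSet[@MeasurableSpace.pi (Fin ℓ) (fun _ => Ω)
      (fun i => F ((((m i + k i : ℤ)) : ℝ) : EReal) ⊤)] Δ) :
    |((Measure.pi fun _ : Fin ℓ => P) (Γ ∩ Δ)).toReal -
        ((Measure.pi fun _ : Fin ℓ => P) Γ).toReal * ((Measure.pi fun _ : Fin ℓ => P) Δ).toReal| ≤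
      ((Measure.pi fun _ : Fin ℓ => P) Γ).toReal * ((Measure.pi fun _ : Fin ℓ => P) Δ).toReal *
        ∑ i : Fin ℓ, ψ (k i) * ∏ j ∈ Finset.Ioi i, (1 + ψ (k j)) := by
  letI : MeasurableSpace (Fin ℓ → Ω) := @MeasurableSpace.pi (Fin ℓ) (fun _ => Ω) (fun _ => mΩ)
  set μ : Measure (Fin ℓ → Ω) := Measure.pi fun _ => P with hμ
  haveI : IsProbabilityMeasure μ := by rw [hμ]; infer_instance
  have hΓfull : MeasurableSet[@MeasurableSpace.pi (Fin ℓ) (fun _ => Ω) (fun _ => mΩ)] Γ :=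
    Stmt9Aux.pi_mono _ _ (fun i => hsub _ _) _ hΓ
  have hΔfull : MeasurableSet[@MeasurableSpace.pi (Fin ℓ) (fun _ => Ω) (fun _ => mΩ)] Δ :=
    Stmt9Aux.pi_mono _ _ (fun i => hsub _ _) _ hΔ
  have hfm : Measurable[@MeasurableSpace.pi (Fin ℓ) (fun _ => Ω)
      (fun i => F ⊥ (((m i : ℤ) : ℝ) : EReal))] (Γ.indicator fun _ => (1 : ENNReal)) :=
    Measurable.indicator measurable_const hΓ
  have hgm : Measurable[@MeasurableSpace.pi (Fin ℓ) (fun _ => Ω)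
      (fun i => F ((((m i + k i : ℤ)) : ℝ) : EReal) ⊤)] (Δ.indicator fun _ => (1 : ENNReal)) :=
    Measurable.indicator measurable_const hΔ
  have key := Stmt9Aux.main P F hsub ψ hψ hmix ℓ m k
    (Γ.indicator fun _ => (1 : ENNReal)) (Δ.indicator fun _ => (1 : ENNReal)) hfm hgm
  have hprodind : ∀ x, Γ.indicator (fun _ => (1 : ENNReal)) x *
      Δ.indicator (fun _ => (1 : ENNReal)) x
      = (Γ ∩ Δ).indicator (fun _ => (1 : ENNReal)) x := by
    intro x
    rw [← Set.inter_indicator_mul]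
    simp
  have hind : ∀ (S : Set (Fin ℓ → Ω)),
      MeasurableSet[@MeasurableSpace.pi (Fin ℓ) (fun _ => Ω) (fun _ => mΩ)] S →
      ∫⁻ x, S.indicator (fun _ => (1 : ENNReal)) x ∂μ = μ S := by
    intro S hS
    rw [lintegral_indicator_const hS 1, one_mul]
  simp_rw [hprodind] at key
  rw [hind Γ hΓfull, hind Δ hΔfull, hind _ (hΓfull.inter hΔfull)] at key
  obtain ⟨k1, k2⟩ := key
  set s : ENNReal := Stmt9Aux.Saux ℓ fun i => ENNReal.ofReal (ψ (k i)) with hs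
  have hsne : s ≠ ⊤ := Stmt9Aux.Saux_ne_top ℓ _ fun i => ENNReal.ofReal_ne_top
  have hΓne : μ Γ ≠ ⊤ := measure_ne_top μ Γ
  have hΔne : μ Δ ≠ ⊤ := measure_ne_top μ Δ
  have hIne : μ (Γ ∩ Δ) ≠ ⊤ := measure_ne_top μ _
  have hbne : μ Γ * μ Δ ≠ ⊤ := ENNReal.mul_ne_top hΓne hΔne
  have h1R := ENNReal.toReal_mono
    (ENNReal.mul_ne_top (ENNReal.add_ne_top.mpr ⟨ENNReal.one_ne_top, hsne⟩) hbne) k1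
  have h2R := ENNReal.toReal_mono
    (ENNReal.add_ne_top.mpr ⟨hIne, ENNReal.mul_ne_top hsne hbne⟩) k2
  rw [ENNReal.toReal_add hIne (ENNReal.mul_ne_top hsne hbne)] at h2R
  simp only [ENNReal.toReal_mul] at h1R h2R
  rw [ENNReal.toReal_add ENNReal.one_ne_top hsne, ENNReal.toReal_one] at h1R
  rw [← Stmt9Aux.Saux_toReal ℓ (fun i => ψ (k i)) (fun i => hψ _), ← hs]
  set a := (μ (Γ ∩ Δ)).toReal
  set b1 := (μ Γ).toReal
  set b2 := (μ Δ).toReal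
  set sR := s.toReal
  rw [abs_le]
  constructor <;> nlinarith [h1R, h2R]
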